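/- On the spin-1/2 ladder of L sites and 2J legs, the compression of the decoupled Hamiltonian by the rung-symmetrization projection equals 1/(2J) times the compression of the full ladder Hamiltonian: P_{[1,L]} H̿ P_{[1,L]} = (1/(2J)) P_{[1,L]} H̃ P_{[1,L]}. -/

import Mathlib

open scoped BigOperators Classical

noncomputable section

namespace XXZ

/-- `m`-value of the basis index `k` for spin `J = twoJ/2`: `m = k - twoJ/2`. -/
def mval (twoJ : ℕ) (k : Fin (twoJ + 1)) : ℝ := (k : ℝ) - (twoJ : ℝ) / 2

/-- The third spin matrix `S³` for spin `J = twoJ/2`. -/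
def S3 (twoJ : ℕ) : Matrix (Fin (twoJ + 1)) (Fin (twoJ + 1)) ℂ :=
  Matrix.diagonal fun k => ((mval twoJ k : ℝ) : ℂ)

/-- The raising operator `S⁺`. -/
def Splus (twoJ : ℕ) : Matrix (Fin (twoJ + 1)) (Fin (twoJ + 1)) ℂ :=
  Matrix.of fun k' k => if (k' : ℕ) = (k : ℕ) + 1 then
    ((Real.sqrt ((twoJ : ℝ) / 2 * ((twoJ : ℝ) / 2 + 1) - mval twoJ k * (mval twoJ k + 1)) : ℝ) : ℂ)
  else 0

/-- The lowering operator `S⁻`. -/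
def Sminus (twoJ : ℕ) : Matrix (Fin (twoJ + 1)) (Fin (twoJ + 1)) ℂ :=
  Matrix.of fun k' k => if (k' : ℕ) + 1 = (k : ℕ) then
    ((Real.sqrt ((twoJ : ℝ) / 2 * ((twoJ : ℝ) / 2 + 1) - mval twoJ k * (mval twoJ k - 1)) : ℝ) : ℂ)
  else 0

/-- `S¹ = (S⁺ + S⁻)/2`. -/
def S1 (twoJ : ℕ) : Matrix (Fin (twoJ + 1)) (Fin (twoJ + 1)) ℂ :=
  (2 : ℂ)⁻¹ • (Splus twoJ + Sminus twoJ)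

/-- `S² = (S⁺ - S⁻)/(2i)`. -/
def S2 (twoJ : ℕ) : Matrix (Fin (twoJ + 1)) (Fin (twoJ + 1)) ℂ :=
  (2 * Complex.I)⁻¹ • (Splus twoJ - Sminus twoJ)

/-- A single-site operator `A` acting at the site `α` of a many-site system. -/
def oneSite {ι : Type*} [Fintype ι] [DecidableEq ι] {d : ℕ}
    (A : Matrix (Fin d) (Fin d) ℂ) (α : ι) :
    Matrix (ι → Fin d) (ι → Fin d) ℂ :=
  Matrix.of fun σ τ => A (σ α) (τ α) *
    ∏ β ∈ Finset.univ.filter (fun β => β ≠ α), (if σ β = τ β then (1 : ℂ) else 0)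

/-- The XXZ interaction `h^J(α,β)` for spin `J = twoJ/2` with anisotropy `Δ`:
`h = J²·1 − S³_α S³_β − Δ⁻¹(S¹_α S¹_β + S²_α S²_β) + J√(1−Δ⁻²)(S³_α − S³_β)`. -/
def hInt (twoJ : ℕ) (Δ : ℝ) {ι : Type*} [Fintype ι] [DecidableEq ι] (α β : ι) :
    Matrix (ι → Fin (twoJ + 1)) (ι → Fin (twoJ + 1)) ℂ :=
  ((((twoJ : ℝ) / 2) ^ 2 : ℝ) : ℂ) • (1 : Matrix (ι → Fin (twoJ + 1)) (ι → Fin (twoJ + 1)) ℂ)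
    - oneSite (S3 twoJ) α * oneSite (S3 twoJ) β
    - ((Δ⁻¹ : ℝ) : ℂ) • (oneSite (S1 twoJ) α * oneSite (S1 twoJ) β
        + oneSite (S2 twoJ) α * oneSite (S2 twoJ) β)
    + (((twoJ : ℝ) / 2 * Real.sqrt (1 - Δ⁻¹ ^ 2) : ℝ) : ℂ) •
        (oneSite (S3 twoJ) α - oneSite (S3 twoJ) β)

/-- The spin-`J` XXZ chain Hamiltonian `H^J_{[1,L]} = Σ_{α=1}^{L-1} h^J(α,α+1)`. -/
def Hchain (twoJ L : ℕ) (Δ : ℝ) :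
    Matrix (Fin L → Fin (twoJ + 1)) (Fin L → Fin (twoJ + 1)) ℂ :=
  ∑ x : Fin L, if h : (x : ℕ) + 1 < L then hInt twoJ Δ x ⟨(x : ℕ) + 1, h⟩ else 0

/-- Total third component of spin `S³_tot = Σ_α S³_α`. -/
def S3tot (twoJ : ℕ) {ι : Type*} [Fintype ι] [DecidableEq ι] :
    Matrix (ι → Fin (twoJ + 1)) (ι → Fin (twoJ + 1)) ℂ :=
  ∑ α : ι, oneSite (S3 twoJ) α

/-- The standard inner product, antilinear in the first argument. -/
def ip {n : Type*} [Fintype n] (v w : n → ℂ) : ℂ :=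
  ∑ i, (starRingEnd ℂ) (v i) * w i

/-- `ψ` lies in the sector of total `S³`-eigenvalue `M`. -/
def inSector (twoJ : ℕ) {ι : Type*} [Fintype ι] [DecidableEq ι]
    (M : ℝ) (ψ : (ι → Fin (twoJ + 1)) → ℂ) : Prop :=
  (S3tot twoJ).mulVec ψ = (M : ℂ) • ψ

/-- The spectral gap `γ([1,L],J,M)`: the infimum of the Rayleigh quotient of `H^J_{[1,L]}`
over nonzero vectors of the sector `M` orthogonal to the kernel of `H^J_{[1,L]}` in that
sector. -/
def gap (twoJ L : ℕ) (Δ M : ℝ) : ℝ :=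
  sInf { r : ℝ | ∃ ψ : (Fin L → Fin (twoJ + 1)) → ℂ, ψ ≠ 0 ∧
    inSector twoJ M ψ ∧
    (∀ φ : (Fin L → Fin (twoJ + 1)) → ℂ,
      (Hchain twoJ L Δ).mulVec φ = 0 → inSector twoJ M φ → ip φ ψ = 0) ∧
    r = (ip ψ ((Hchain twoJ L Δ).mulVec ψ)).re / (ip ψ ψ).re }

/-- The full spin-1/2 ladder Hamiltonian `H̃` with `2J` legs. -/
def Hladder (twoJ L : ℕ) (Δ : ℝ) :
    Matrix ((Fin L × Fin twoJ) → Fin (1 + 1)) ((Fin L × Fin twoJ) → Fin (1 + 1)) ℂ :=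
  ∑ x : Fin L, ∑ j : Fin twoJ, ∑ k : Fin twoJ,
    if h : (x : ℕ) + 1 < L then hInt 1 Δ (x, j) ((⟨(x : ℕ) + 1, h⟩ : Fin L), k) else 0

/-- The decoupled spin-1/2 ladder Hamiltonian `H̿` (2J disjoint spin-1/2 chains). -/
def Hdec (twoJ L : ℕ) (Δ : ℝ) :
    Matrix ((Fin L × Fin twoJ) → Fin (1 + 1)) ((Fin L × Fin twoJ) → Fin (1 + 1)) ℂ :=
  ∑ x : Fin L, ∑ j : Fin twoJ,
    if h : (x : ℕ) + 1 < L then hInt 1 Δ (x, j) ((⟨(x : ℕ) + 1, h⟩ : Fin L), j) else 0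

/-- The orthogonal projection `P_{[1,L]} = Π_α P_α` onto tensors symmetric under
permutations within each rung `{α}×[1,2J]` (the average of the rung-permutation
unitaries). -/
def Psym (twoJ L : ℕ) :
    Matrix ((Fin L × Fin twoJ) → Fin (1 + 1)) ((Fin L × Fin twoJ) → Fin (1 + 1)) ℂ :=
  ((Nat.factorial twoJ : ℂ) ^ L)⁻¹ •
    ∑ π : Fin L → Equiv.Perm (Fin twoJ),
      Matrix.of fun σ τ =>
        if (∀ p : Fin L × Fin twoJ, τ p = σ (p.1, (π p.1) p.2)) then (1 : ℂ) else 0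

/-- Membership in the ground state space `𝒢(Λ̃,M) = ker H̃ ∩ ℋ(Λ̃,M)`. -/
def inG (twoJ L : ℕ) (Δ M : ℝ) (ψ : ((Fin L × Fin twoJ) → Fin (1 + 1)) → ℂ) : Prop :=
  (Hladder twoJ L Δ).mulVec ψ = 0 ∧ inSector 1 M ψ

/-- Membership in `ℋ₀(Λ̃,M) = ker H̿ ∩ ℋ(Λ̃,M)`. -/
def inH0 (twoJ L : ℕ) (Δ M : ℝ) (ψ : ((Fin L × Fin twoJ) → Fin (1 + 1)) → ℂ) : Prop :=
  (Hdec twoJ L Δ).mulVec ψ = 0 ∧ inSector 1 M ψ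

/-- Membership in `ℋ_{0,⊥}(Λ̃,M) = ℋ₀(Λ̃,M) ∩ 𝒢(Λ̃,M)^⊥`. -/
def inH0perp (twoJ L : ℕ) (Δ M : ℝ) (ψ : ((Fin L × Fin twoJ) → Fin (1 + 1)) → ℂ) : Prop :=
  inH0 twoJ L Δ M ψ ∧ ∀ φ, inG twoJ L Δ M φ → ip φ ψ = 0

/-- `δ([1,L],J,M) = sup{⟨ψ, P_{[1,L]} ψ⟩/⟨ψ,ψ⟩ : 0 ≠ ψ ∈ ℋ_{0,⊥}(Λ̃,M)}`
(`sSup ∅ = 0` in ℝ, matching the convention that `δ = 0` if `ℋ_{0,⊥} = {0}`). -/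
def delta (twoJ L : ℕ) (Δ M : ℝ) : ℝ :=
  sSup { r : ℝ | ∃ ψ : ((Fin L × Fin twoJ) → Fin (1 + 1)) → ℂ, ψ ≠ 0 ∧
    inH0perp twoJ L Δ M ψ ∧
    r = (ip ψ ((Psym twoJ L).mulVec ψ)).re / (ip ψ ψ).re }

/-! ### Auxiliary machinery for `compression_identity` -/

/-- The permutation of ladder sites induced by a family of rung permutations. -/
def actE (twoJ L : ℕ) (π : Fin L → Equiv.Perm (Fin twoJ)) :
    Equiv.Perm (Fin L × Fin twoJ) where
  toFun p := (p.1, π p.1 p.2)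
  invFun p := (p.1, (π p.1).symm p.2)
  left_inv p := by simp
  right_inv p := by simp

/-- The unitary permutation matrix of a family of rung permutations. -/
def permMat (twoJ L : ℕ) (π : Fin L → Equiv.Perm (Fin twoJ)) :
    Matrix ((Fin L × Fin twoJ) → Fin (1 + 1)) ((Fin L × Fin twoJ) → Fin (1 + 1)) ℂ :=
  Matrix.of fun σ τ =>
    if (∀ p : Fin L × Fin twoJ, τ p = σ (p.1, (π p.1) p.2)) then (1 : ℂ) else 0

lemma Psym_eq (twoJ L : ℕ) :
    Psym twoJ L = ((Nat.factorial twoJ : ℂ) ^ L)⁻¹ • ∑ π, permMat twoJ L π := rfl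

lemma permMat_apply (twoJ L : ℕ) (π : Fin L → Equiv.Perm (Fin twoJ)) (σ τ) :
    permMat twoJ L π σ τ = if τ = fun p => σ (actE twoJ L π p) then (1 : ℂ) else 0 := by
  simp only [permMat, Matrix.of_apply, actE, Equiv.coe_fn_mk, funext_iff]

lemma permMat_mul_apply (twoJ L : ℕ) (π : Fin L → Equiv.Perm (Fin twoJ))
    (N : Matrix ((Fin L × Fin twoJ) → Fin (1 + 1)) ((Fin L × Fin twoJ) → Fin (1 + 1)) ℂ)
    (σ τ) : (permMat twoJ L π * N) σ τ = N (fun p => σ (actE twoJ L π p)) τ := by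
  rw [Matrix.mul_apply, Finset.sum_eq_single (fun p => σ (actE twoJ L π p))]
  · rw [permMat_apply, if_pos rfl, one_mul]
  · intro b _ hb
    rw [permMat_apply, if_neg hb, zero_mul]
  · simp

lemma mul_permMat_apply (twoJ L : ℕ) (π : Fin L → Equiv.Perm (Fin twoJ))
    (N : Matrix ((Fin L × Fin twoJ) → Fin (1 + 1)) ((Fin L × Fin twoJ) → Fin (1 + 1)) ℂ)
    (σ τ) : (N * permMat twoJ L π) σ τ = N σ (fun p => τ ((actE twoJ L π).symm p)) := by
  rw [Matrix.mul_apply, Finset.sum_eq_single (fun p => τ ((actE twoJ L π).symm p))]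
  · rw [permMat_apply, if_pos, mul_one]
    funext p; rw [Equiv.symm_apply_apply]
  · intro b _ hb
    rw [permMat_apply, if_neg, mul_zero]
    intro hc
    apply hb
    funext p
    have := congrFun hc ((actE twoJ L π).symm p)
    rw [Equiv.apply_symm_apply] at this
    exact this.symm
  · simp

lemma permMat_mul_permMat (twoJ L : ℕ) (π π' : Fin L → Equiv.Perm (Fin twoJ)) :
    permMat twoJ L π * permMat twoJ L π' = permMat twoJ L (fun a => π a * π' a) := by
  ext σ τ
  rw [permMat_mul_apply]
  simp only [permMat, Matrix.of_apply, actE, Equiv.coe_fn_mk, Equiv.Perm.mul_apply]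
  exact if_congr Iff.rfl rfl rfl

lemma Psym_mul_permMat (twoJ L : ℕ) (π : Fin L → Equiv.Perm (Fin twoJ)) :
    Psym twoJ L * permMat twoJ L π = Psym twoJ L := by
  have key : ∑ ρ : Fin L → Equiv.Perm (Fin twoJ), permMat twoJ L ρ * permMat twoJ L π
      = ∑ ρ : Fin L → Equiv.Perm (Fin twoJ), permMat twoJ L ρ :=
    Fintype.sum_bijective _ (Equiv.piCongrRight fun a => Equiv.mulRight (π a)).bijective
      (fun ρ => permMat twoJ L ρ * permMat twoJ L π) (permMat twoJ L)
      (fun ρ => by beta_reduce; rw [permMat_mul_permMat]; rfl)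
  rw [Psym_eq, smul_mul_assoc, Finset.sum_mul, key]

lemma permMat_mul_Psym (twoJ L : ℕ) (π : Fin L → Equiv.Perm (Fin twoJ)) :
    permMat twoJ L π * Psym twoJ L = Psym twoJ L := by
  have key : ∑ ρ : Fin L → Equiv.Perm (Fin twoJ), permMat twoJ L π * permMat twoJ L ρ
      = ∑ ρ : Fin L → Equiv.Perm (Fin twoJ), permMat twoJ L ρ :=
    Fintype.sum_bijective _ (Equiv.piCongrRight fun a => Equiv.mulLeft (π a)).bijective
      (fun ρ => permMat twoJ L π * permMat twoJ L ρ) (permMat twoJ L)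
      (fun ρ => by beta_reduce; rw [permMat_mul_permMat]; rfl)
  rw [Psym_eq, Matrix.mul_smul, Finset.mul_sum, key]

lemma perm_oneSite (twoJ L : ℕ) (A : Matrix (Fin (1 + 1)) (Fin (1 + 1)) ℂ)
    (π : Fin L → Equiv.Perm (Fin twoJ)) (q : Fin L × Fin twoJ) :
    permMat twoJ L π * oneSite A q = oneSite A (actE twoJ L π q) * permMat twoJ L π := by
  ext σ τ
  rw [permMat_mul_apply, mul_permMat_apply]
  simp only [oneSite, Matrix.of_apply]
  rw [Equiv.symm_apply_apply]
  congr 1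
  rw [Finset.prod_filter, Finset.prod_filter]
  rw [← Fintype.prod_equiv (actE twoJ L π)
    (fun β => if β ≠ q then (if σ (actE twoJ L π β) = τ β then (1:ℂ) else 0) else 1)
    (fun β => if β ≠ actE twoJ L π q then (if σ β = τ ((actE twoJ L π).symm β) then (1:ℂ) else 0) else 1)]
  intro β
  rw [Equiv.symm_apply_apply]
  congr 1
  simp [EmbeddingLike.apply_eq_iff_eq]

lemma perm_oneSite_pair (twoJ L : ℕ) (A B : Matrix (Fin (1 + 1)) (Fin (1 + 1)) ℂ)
    (π : Fin L → Equiv.Perm (Fin twoJ)) (q q' : Fin L × Fin twoJ) :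
    permMat twoJ L π * (oneSite A q * oneSite B q') =
      oneSite A (actE twoJ L π q) * oneSite B (actE twoJ L π q') * permMat twoJ L π := by
  rw [← mul_assoc, perm_oneSite, mul_assoc, perm_oneSite, ← mul_assoc]

lemma perm_hInt (twoJ L : ℕ) (Δ : ℝ) (π : Fin L → Equiv.Perm (Fin twoJ))
    (q q' : Fin L × Fin twoJ) :
    permMat twoJ L π * hInt 1 Δ q q' =
      hInt 1 Δ (actE twoJ L π q) (actE twoJ L π q') * permMat twoJ L π := by
  simp only [hInt, mul_sub, sub_mul, mul_add, add_mul, mul_smul_comm, smul_mul_assoc,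
    mul_one, one_mul, perm_oneSite_pair, perm_oneSite]

lemma Psym_hInt_Psym (twoJ L : ℕ) (Δ : ℝ) (x x' : Fin L) (hx : x ≠ x')
    (j j' k k' : Fin twoJ) :
    Psym twoJ L * hInt 1 Δ (x, j) (x', k) * Psym twoJ L =
      Psym twoJ L * hInt 1 Δ (x, j') (x', k') * Psym twoJ L := by
  classical
  set π : Fin L → Equiv.Perm (Fin twoJ) :=
    fun a => if a = x then Equiv.swap j j' else if a = x' then Equiv.swap k k' else 1 with hπ
  have e1 : actE twoJ L π (x, j) = (x, j') := by
    simp [actE, hπ, Equiv.swap_apply_left]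
  have e2 : actE twoJ L π (x', k) = (x', k') := by
    simp [actE, hπ, (Ne.symm hx), Equiv.swap_apply_left]
  calc Psym twoJ L * hInt 1 Δ (x, j) (x', k) * Psym twoJ L
      = Psym twoJ L * (permMat twoJ L π * hInt 1 Δ (x, j) (x', k)) * Psym twoJ L := by
        rw [← mul_assoc, Psym_mul_permMat]
    _ = Psym twoJ L * hInt 1 Δ (x, j') (x', k') * Psym twoJ L := by
        rw [perm_hInt, e1, e2, ← mul_assoc, mul_assoc (Psym twoJ L * _), permMat_mul_Psym]

/-- The compression of the decoupled ladder Hamiltonian by the rung-symmetrization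
projection equals `1/(2J)` times the compression of the full ladder Hamiltonian:
`P H̿ P = (1/(2J)) P H̃ P`. -/
theorem compression_identity (twoJ L : ℕ) (h2J : 1 ≤ twoJ) (hL : 2 ≤ L) (Δ : ℝ) (hΔ : 1 < Δ) :
    Psym twoJ L * Hdec twoJ L Δ * Psym twoJ L =
      ((twoJ : ℂ))⁻¹ • (Psym twoJ L * Hladder twoJ L Δ * Psym twoJ L) := by
  classical
  have hJ0 : (twoJ : ℂ) ≠ 0 := Nat.cast_ne_zero.mpr (by omega)
  set P := Psym twoJ L with hP
  simp only [Hdec, Hladder, Finset.mul_sum, Finset.sum_mul, Finset.smul_sum,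
    mul_dite, dite_mul, mul_zero, zero_mul, smul_dite, smul_zero]
  apply Finset.sum_congr rfl
  intro x _
  by_cases h : (x : ℕ) + 1 < L
  · simp only [dif_pos h]
    set x' : Fin L := ⟨(x : ℕ) + 1, h⟩ with hx'
    have hxx : x ≠ x' := by
      intro he
      have h2 := congrArg Fin.val he
      simp only [hx'] at h2
      omega
    set j0 : Fin twoJ := ⟨0, by omega⟩ with hj0
    set C := P * hInt 1 Δ (x, j0) (x', j0) * P with hC
    have hall : ∀ j k : Fin twoJ, P * hInt 1 Δ (x, j) (x', k) * P = C :=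
      fun j k => Psym_hInt_Psym twoJ L Δ x x' hxx j j0 k j0
    calc ∑ j : Fin twoJ, P * hInt 1 Δ (x, j) (x', j) * P
        = ∑ _j : Fin twoJ, C := Finset.sum_congr rfl (fun j _ => hall j j)
      _ = twoJ • C := by rw [Finset.sum_const, Finset.card_univ, Fintype.card_fin]
      _ = ∑ j : Fin twoJ, ∑ k : Fin twoJ, (twoJ : ℂ)⁻¹ • (P * hInt 1 Δ (x, j) (x', k) * P) := by
          have h3 : ∀ j k : Fin twoJ, (twoJ : ℂ)⁻¹ • (P * hInt 1 Δ (x, j) (x', k) * P)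
              = (twoJ : ℂ)⁻¹ • C := fun j k => by rw [hall]
          simp only [h3, Finset.sum_const, Finset.card_univ, Fintype.card_fin]
          simp only [← Nat.cast_smul_eq_nsmul ℂ, smul_smul]
          rw [mul_inv_cancel₀ hJ0, mul_one]
  · simp only [dif_neg h]
    simp


end XXZ
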